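/- arXiv:2604.19184 — 4 statements merged into one kernel-verified Lean document; each statement's English description precedes it below -/
import Mathlib

section
/- Define u_0(x) = 1 for all x ≥ 0 and u_{k+1} = T u_k. Then for every x ≥ 0 one has the closed form ∑_{k=0}^∞ u_k(x) = 1 + 2 ∫₀ˣ e^{1 − e^{−y}} dy. -/
open MeasureTheory Real

/-- The kernel operator `(Tg)(x) = ∫₀ˣ (e^{−y} + e^{−(x−y)}) g(y) dy`. -/
noncomputable def T (g : ℝ → ℝ) : ℝ → ℝ :=
  fun x => ∫ y in (0:ℝ)..x, (Real.exp (-y) + Real.exp (-(x - y))) * g y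

/-- `u 0 = 1` and `u (k+1) = T (u k)`. -/
noncomputable def u (k : ℕ) : ℝ → ℝ := T^[k] (fun _ => 1)

namespace Stmt2Aux

noncomputable def phi (y : ℝ) : ℝ := Real.exp (1 - Real.exp (-y))

noncomputable def Fi (x : ℝ) : ℝ := ∫ y in (0:ℝ)..x, phi y

noncomputable def S (x : ℝ) : ℝ := 1 + 2 * Fi x

lemma phi_cont : Continuous phi := by
  unfold phi; continuity

lemma Fi_hasDerivAt (x : ℝ) : HasDerivAt Fi (phi x) x :=
  (phi_cont.integral_hasStrictDerivAt 0 x).hasDerivAt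

lemma Fi_cont : Continuous Fi :=
  continuous_iff_continuousAt.2 fun x => (Fi_hasDerivAt x).continuousAt

lemma kernel_cont (x : ℝ) :
    Continuous fun y => Real.exp (-y) + Real.exp (-(x - y)) := by continuity

lemma primitive_cont {h : ℝ → ℝ} (hh : Continuous h) :
    Continuous fun x => ∫ y in (0:ℝ)..x, h y :=
  continuous_iff_continuousAt.2 fun x =>
    ((hh.integral_hasStrictDerivAt 0 x).hasDerivAt).continuousAt

lemma T_cont {g : ℝ → ℝ} (hg : Continuous g) : Continuous (T g) := by
  have h1 : ∀ x, T g x = (∫ y in (0:ℝ)..x, Real.exp (-y) * g y)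
      + Real.exp (-x) * ∫ y in (0:ℝ)..x, Real.exp y * g y := by
    intro x
    have e1 : IntervalIntegrable (fun y => Real.exp (-y) * g y) volume 0 x :=
      (Continuous.mul (by continuity) hg).intervalIntegrable _ _
    have e2 : IntervalIntegrable (fun y => Real.exp (-x) * (Real.exp y * g y)) volume 0 x :=
      (continuous_const.mul (Real.continuous_exp.mul hg)).intervalIntegrable _ _
    have hcongr : ∀ y, (Real.exp (-y) + Real.exp (-(x - y))) * g y
        = Real.exp (-y) * g y + Real.exp (-x) * (Real.exp y * g y) := by
      intro y
      have : Real.exp (-(x - y)) = Real.exp (-x) * Real.exp y := by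
        rw [← Real.exp_add]; ring_nf
      rw [this]; ring
    calc T g x = ∫ y in (0:ℝ)..x,
          (Real.exp (-y) * g y + Real.exp (-x) * (Real.exp y * g y)) := by
          exact intervalIntegral.integral_congr fun y _ => hcongr y
      _ = _ := by
          rw [intervalIntegral.integral_add e1 e2, intervalIntegral.integral_const_mul]
  have hc : Continuous fun x => (∫ y in (0:ℝ)..x, Real.exp (-y) * g y)
      + Real.exp (-x) * ∫ y in (0:ℝ)..x, Real.exp y * g y := by
    apply Continuous.add
    · exact primitive_cont (Continuous.mul (by continuity) hg)
    · exact (by continuity : Continuous fun x : ℝ => Real.exp (-x)).mul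
        (primitive_cont (Real.continuous_exp.mul hg))
  exact hc.congr fun x => (h1 x).symm

lemma T_bound {g : ℝ → ℝ} (hg : Continuous g) {b C : ℝ} (hC : 0 ≤ C) (k : ℕ)
    (h : ∀ y ∈ Set.Icc (0:ℝ) b, |g y| ≤ C * (2*y)^k / (k.factorial : ℝ)) :
    ∀ x ∈ Set.Icc (0:ℝ) b, |T g x| ≤ C * (2*x)^(k+1) / ((k+1).factorial : ℝ) := by
  intro x hxb
  obtain ⟨hx0, hxble⟩ := hxb
  have habs : |T g x| ≤ ∫ y in (0:ℝ)..x,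
      |(Real.exp (-y) + Real.exp (-(x - y))) * g y| :=
    intervalIntegral.abs_integral_le_integral_abs hx0
  have hint1 : IntervalIntegrable
      (fun y => |(Real.exp (-y) + Real.exp (-(x - y))) * g y|) volume 0 x :=
    (((kernel_cont x).mul hg).abs).intervalIntegrable _ _
  have hint2 : IntervalIntegrable
      (fun y => 2 * (C * (2*y)^k / (k.factorial : ℝ))) volume 0 x := by
    apply Continuous.intervalIntegrable
    continuity
  have hmono : (∫ y in (0:ℝ)..x, |(Real.exp (-y) + Real.exp (-(x - y))) * g y|)
      ≤ ∫ y in (0:ℝ)..x, 2 * (C * (2*y)^k / (k.factorial : ℝ)) := by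
    apply intervalIntegral.integral_mono_on hx0 hint1 hint2
    intro y hy
    rw [abs_mul]
    have hK : |Real.exp (-y) + Real.exp (-(x - y))| ≤ 2 := by
      rw [abs_of_nonneg (by positivity)]
      have h1 : Real.exp (-y) ≤ 1 := Real.exp_le_one_iff.2 (by linarith [hy.1])
      have h2 : Real.exp (-(x - y)) ≤ 1 := Real.exp_le_one_iff.2 (by linarith [hy.2])
      linarith
    have hgy : |g y| ≤ C * (2*y)^k / (k.factorial : ℝ) :=
      h y ⟨hy.1, le_trans hy.2 hxble⟩
    exact mul_le_mul hK hgy (abs_nonneg _) (by norm_num)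
  have hval : (∫ y in (0:ℝ)..x, 2 * (C * (2*y)^k / (k.factorial : ℝ)))
      = C * (2*x)^(k+1) / ((k+1).factorial : ℝ) := by
    have hcongr : ∀ y : ℝ, 2 * (C * (2*y)^k / (k.factorial : ℝ))
        = (2 * C * 2^k / (k.factorial : ℝ)) * y^k := by
      intro y; rw [mul_pow]; ring
    rw [intervalIntegral.integral_congr (fun y _ => hcongr y),
      intervalIntegral.integral_const_mul, integral_pow]
    have hk : ((k.factorial : ℝ)) ≠ 0 := by positivity
    have hk1 : ((k:ℝ) + 1) ≠ 0 := by positivity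
    rw [Nat.factorial_succ]
    push_cast
    field_simp
    ring
  linarith

lemma u_succ (k : ℕ) : u (k+1) = T (u k) := by
  simp only [u, Function.iterate_succ_apply']

lemma u_cont (k : ℕ) : Continuous (u k) := by
  induction k with
  | zero => simpa [u] using continuous_const
  | succ k ih => rw [u_succ]; exact T_cont ih

lemma u_bound (k : ℕ) : ∀ x : ℝ, 0 ≤ x → |u k x| ≤ (2*x)^k / (k.factorial : ℝ) := by
  induction k with
  | zero => intro x hx; simp [u]
  | succ k ih =>
      intro x hx
      have := T_bound (u_cont k) (b := x) (C := 1) zero_le_one k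
        (fun y hy => by simpa using ih y hy.1) x ⟨hx, le_rfl⟩
      rw [u_succ]
      simpa using this

lemma exp_neg_hasDerivAt (y : ℝ) :
    HasDerivAt (fun y : ℝ => Real.exp (-y)) (-Real.exp (-y)) y := by
  simpa [Function.comp_def] using (Real.hasDerivAt_exp (-y)).comp y ((hasDerivAt_id y).neg)

lemma phi_hasDerivAt (y : ℝ) : HasDerivAt phi (phi y * Real.exp (-y)) y := by
  have hinner : HasDerivAt (fun y : ℝ => 1 - Real.exp (-y)) (Real.exp (-y)) y := by
    simpa using (exp_neg_hasDerivAt y).const_sub 1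
  exact (Real.hasDerivAt_exp (1 - Real.exp (-y))).comp y hinner

lemma TS (x : ℝ) : T S x = 2 * Fi x := by
  set G : ℝ → ℝ := fun y => -Real.exp (-y) + Real.exp (-(x - y))
      + 2 * (phi y - Real.exp (-y) * Fi y)
      + 2 * Real.exp (-x) * (Real.exp y * Fi y - Real.exp y * phi y + Fi y) with hGdef
  have hderiv : ∀ y ∈ Set.uIcc (0:ℝ) x,
      HasDerivAt G ((Real.exp (-y) + Real.exp (-(x - y))) * S y) y := by
    intro y _
    have h1 := exp_neg_hasDerivAt y
    have h2 : HasDerivAt (fun y : ℝ => Real.exp (-(x - y))) (Real.exp (-(x - y))) y := by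
      have hinner : HasDerivAt (fun y : ℝ => -(x - y)) 1 y := by
        exact ((hasDerivAt_id y).const_sub x).neg.congr_deriv (by norm_num)
      simpa [Function.comp_def] using (Real.hasDerivAt_exp (-(x - y))).comp y hinner
    have hphi := phi_hasDerivAt y
    have hFi := Fi_hasDerivAt y
    have hexp : HasDerivAt Real.exp (Real.exp y) y := Real.hasDerivAt_exp y
    have hA := h1.neg
    have hC := (hphi.sub (h1.mul hFi)).const_mul (2:ℝ)
    have hD := (((hexp.mul hFi).sub (hexp.mul hphi)).add hFi).const_mul
      (2 * Real.exp (-x))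
    have hG := ((hA.add h2).add hC).add hD
    refine hG.congr_deriv ?_
    symm
    have hxy : Real.exp (-(x - y)) = Real.exp (-x) * Real.exp y := by
      rw [← Real.exp_add]; ring_nf
    have hyy : Real.exp y * Real.exp (-y) = 1 := by
      rw [← Real.exp_add]; simp
    simp only [S, hxy]
    linear_combination (2 * Real.exp (-x) * phi y) * hyy
  have hSc : Continuous S := by
    unfold S; exact continuous_const.add (continuous_const.mul Fi_cont)
  have hic : IntervalIntegrable
      (fun y => (Real.exp (-y) + Real.exp (-(x - y))) * S y) volume 0 x :=
    ((kernel_cont x).mul hSc).intervalIntegrable _ _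
  have hftc := intervalIntegral.integral_eq_sub_of_hasDerivAt hderiv hic
  have hTS : T S x = G x - G 0 := hftc
  rw [hTS, hGdef]
  have hFi0 : Fi 0 = 0 := intervalIntegral.integral_same
  have hphi0 : phi 0 = 1 := by simp [phi]
  have hxx : Real.exp (-x) * Real.exp x = 1 := by
    rw [← Real.exp_add]; simp
  have hxx0 : Real.exp (-(x - x)) = 1 := by norm_num
  have hx0 : Real.exp (-(x - 0)) = Real.exp (-x) := by norm_num
  simp only [hFi0, hphi0, hxx0, hx0, neg_zero, Real.exp_zero, mul_zero, zero_mul,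
    mul_one, one_mul, sub_zero, add_zero, zero_add]
  linear_combination (2 * Fi x - 2 * phi x) * hxx

lemma S_cont : Continuous S := by
  unfold S; exact continuous_const.add (continuous_const.mul Fi_cont)

noncomputable def P (n : ℕ) (y : ℝ) : ℝ := ∑ k ∈ Finset.range n, u k y

lemma P_cont (n : ℕ) : Continuous (P n) := by
  unfold P; exact continuous_finset_sum _ fun k _ => u_cont k

lemma TP (n : ℕ) (y : ℝ) : T (P n) y = ∑ k ∈ Finset.range n, T (u k) y := by
  simp only [T, P, Finset.mul_sum]
  exact intervalIntegral.integral_finset_sum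
    (fun k _ => ((kernel_cont y).mul (u_cont k)).intervalIntegrable _ _)

lemma T_sub (g h : ℝ → ℝ) (hg : Continuous g) (hh : Continuous h) (y : ℝ) :
    T (fun z => g z - h z) y = T g y - T h y := by
  simp only [T, mul_sub]
  exact intervalIntegral.integral_sub
    (((kernel_cont y).mul hg).intervalIntegrable _ _)
    (((kernel_cont y).mul hh).intervalIntegrable _ _)

lemma E_rec (n : ℕ) (y : ℝ) : S y - P (n+1) y = T (fun z => S z - P n z) y := by
  rw [T_sub S (P n) S_cont (P_cont n), TP]
  have hP : P (n+1) y = 1 + ∑ k ∈ Finset.range n, T (u k) y := by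
    rw [P, Finset.sum_range_succ']
    have : ∀ k, u (k+1) y = T (u k) y := fun k => by rw [u_succ]
    simp only [this]
    have : u 0 y = 1 := by simp [u]
    rw [this]; ring
  rw [hP, TS]
  show S y - _ = (2 * Fi y) - _
  rw [S]; ring

lemma Fi_nonneg {y : ℝ} (hy : 0 ≤ y) : 0 ≤ Fi y :=
  intervalIntegral.integral_nonneg hy (fun z _ => (Real.exp_pos _).le)

lemma S_nonneg {y : ℝ} (hy : 0 ≤ y) : 0 ≤ S y := by
  have := Fi_nonneg hy; unfold S; linarith

lemma Fi_mono {y x : ℝ} (hy : 0 ≤ y) (hyx : y ≤ x) : Fi y ≤ Fi x := by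
  have hsplit : (∫ z in (0:ℝ)..y, phi z) + (∫ z in y..x, phi z)
      = ∫ z in (0:ℝ)..x, phi z :=
    intervalIntegral.integral_add_adjacent_intervals
      (phi_cont.intervalIntegrable _ _) (phi_cont.intervalIntegrable _ _)
  have hpos : 0 ≤ ∫ z in y..x, phi z :=
    intervalIntegral.integral_nonneg hyx (fun z _ => (Real.exp_pos _).le)
  unfold Fi
  linarith [hsplit]

lemma E_bound (x : ℝ) (hx : 0 ≤ x) :
    ∀ n : ℕ, ∀ y ∈ Set.Icc (0:ℝ) x,
      |S y - P n y| ≤ S x * (2*y)^n / (n.factorial : ℝ) := by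
  intro n
  induction n with
  | zero =>
      intro y hy
      have h1 : 0 ≤ S y := S_nonneg hy.1
      have h2 : S y ≤ S x := by
        have := Fi_mono hy.1 hy.2; unfold S; linarith
      simp only [P, Finset.range_zero, Finset.sum_empty, sub_zero, pow_zero,
        Nat.factorial_zero, Nat.cast_one, mul_one]
      rw [abs_of_nonneg h1]
      linarith
  | succ n ih =>
      intro y hy
      have hcont : Continuous fun z => S z - P n z := S_cont.sub (P_cont n)
      have := T_bound hcont (b := x) (C := S x) (S_nonneg hx) n ih y hy
      rw [E_rec]
      exact this

end Stmt2Aux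

open Stmt2Aux

theorem stmt_2 (x : ℝ) (hx : 0 ≤ x) :
    Summable (fun k : ℕ => u k x) ∧
    (∑' k : ℕ, u k x) = 1 + 2 * ∫ y in (0:ℝ)..x, Real.exp (1 - Real.exp (-y)) := by
  have hsum : Summable (fun k : ℕ => u k x) := by
    apply Summable.of_norm_bounded (Real.summable_pow_div_factorial (2*x))
    intro k
    simpa [Real.norm_eq_abs] using u_bound k x hx
  refine ⟨hsum, ?_⟩
  have hP : Filter.Tendsto (fun n => P n x) Filter.atTop (nhds (S x)) := by
    have h0 : Filter.Tendsto (fun n : ℕ => S x * (2*x)^n / (n.factorial : ℝ))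
        Filter.atTop (nhds 0) := by
      have h1 := FloorSemiring.tendsto_pow_div_factorial_atTop (K := ℝ) (2*x)
      have h2 := h1.const_mul (S x)
      simpa [mul_div_assoc] using h2
    have hsq : Filter.Tendsto (fun n => P n x - S x) Filter.atTop (nhds 0) := by
      apply squeeze_zero_norm _ h0
      intro n
      have := E_bound x hx n x ⟨hx, le_rfl⟩
      simpa [Real.norm_eq_abs, abs_sub_comm] using this
    have := hsq.add_const (S x)
    simpa using this
  have hT := hsum.hasSum.tendsto_sum_nat
  have heq : (∑' k : ℕ, u k x) = S x := tendsto_nhds_unique hT hP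
  rw [heq]
  rfl
end

section
/- Define u_0(x) = 1 for all x ≥ 0 and u_{k+1} = T u_k. Then for every x ≥ 0 one has ∑_{k=1}^∞ u_k(x) ≤ 2 e x, where e is Euler's number. -/
open MeasureTheory Real

/-! ### Auxiliary development

The sum `∑_{k≥1} u_k` is bounded by the fixed point `FF x = 2∫₀ˣ e^{1-e^{-t}} dt`
of `g ↦ T1 + Tg`, which is in turn bounded by `2 e x`. -/

noncomputable def FF : ℝ → ℝ := fun x => ∫ t in (0:ℝ)..x, 2 * Real.exp (1 - Real.exp (-t))

lemma contFF' : Continuous fun t : ℝ => 2 * Real.exp (1 - Real.exp (-t)) := by continuity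

lemma hasDerivAt_FF (x : ℝ) : HasDerivAt FF (2 * Real.exp (1 - Real.exp (-x))) x :=
  (contFF'.integral_hasStrictDerivAt 0 x).hasDerivAt

lemma contFF : Continuous FF :=
  Differentiable.continuous (fun x => (hasDerivAt_FF x).differentiableAt)

lemma T_eq {g : ℝ → ℝ} (hg : Continuous g) (x : ℝ) :
    T g x = (∫ y in (0:ℝ)..x, Real.exp (-y) * g y)
      + Real.exp (-x) * ∫ y in (0:ℝ)..x, Real.exp y * g y := by
  have h1 : IntervalIntegrable (fun y => Real.exp (-y) * g y) volume 0 x :=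
    (Continuous.mul (by continuity) hg).intervalIntegrable 0 x
  have h2 : IntervalIntegrable (fun y => Real.exp (-x) * (Real.exp y * g y)) volume 0 x :=
    (Continuous.mul continuous_const ((Real.continuous_exp).mul hg)).intervalIntegrable 0 x
  have : T g x = ∫ y in (0:ℝ)..x,
      (Real.exp (-y) * g y + Real.exp (-x) * (Real.exp y * g y)) := by
    unfold T
    apply intervalIntegral.integral_congr
    intro y _
    have he : Real.exp (-(x - y)) = Real.exp (-x) * Real.exp y := by
      rw [← Real.exp_add]; ring_nf
    simp only []
    rw [he]; ring
  rw [this, intervalIntegral.integral_add h1 h2, intervalIntegral.integral_const_mul]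

lemma T_cont {g : ℝ → ℝ} (hg : Continuous g) : Continuous (T g) := by
  have : T g = fun x => (∫ y in (0:ℝ)..x, Real.exp (-y) * g y)
      + Real.exp (-x) * ∫ y in (0:ℝ)..x, Real.exp y * g y := funext (T_eq hg)
  rw [this]
  have c1 : Continuous fun x => ∫ y in (0:ℝ)..x, Real.exp (-y) * g y :=
    intervalIntegral.continuous_primitive
      (fun a b => (Continuous.mul (by continuity) hg).intervalIntegrable a b) 0
  have c2 : Continuous fun x => ∫ y in (0:ℝ)..x, Real.exp y * g y :=
    intervalIntegral.continuous_primitive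
      (fun a b => (Real.continuous_exp.mul hg).intervalIntegrable a b) 0
  exact c1.add ((by continuity : Continuous fun x : ℝ => Real.exp (-x)).mul c2)

lemma T_add {g h : ℝ → ℝ} (hg : Continuous g) (hh : Continuous h) (x : ℝ) :
    T (fun y => g y + h y) x = T g x + T h x := by
  unfold T
  have h1 : IntervalIntegrable (fun y => (Real.exp (-y) + Real.exp (-(x - y))) * g y)
      volume 0 x := (Continuous.mul (by continuity) hg).intervalIntegrable 0 x
  have h2 : IntervalIntegrable (fun y => (Real.exp (-y) + Real.exp (-(x - y))) * h y)
      volume 0 x := (Continuous.mul (by continuity) hh).intervalIntegrable 0 x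
  rw [← intervalIntegral.integral_add h1 h2]
  apply intervalIntegral.integral_congr
  intro y _; simp only []; ring

lemma T_mono {g h : ℝ → ℝ} (hg : Continuous g) (hh : Continuous h) {x : ℝ} (hx : 0 ≤ x)
    (hle : ∀ y ∈ Set.Icc 0 x, g y ≤ h y) : T g x ≤ T h x := by
  unfold T
  apply intervalIntegral.integral_mono_on hx
    ((Continuous.mul (by continuity) hg).intervalIntegrable 0 x)
    ((Continuous.mul (by continuity) hh).intervalIntegrable 0 x)
  intro y hy
  exact mul_le_mul_of_nonneg_left (hle y hy) (by positivity)

lemma T_nonneg {g : ℝ → ℝ} {x : ℝ} (hx : 0 ≤ x)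
    (hg : ∀ y ∈ Set.Icc 0 x, 0 ≤ g y) : 0 ≤ T g x := by
  unfold T
  apply intervalIntegral.integral_nonneg hx
  intro y hy
  exact mul_nonneg (by positivity) (hg y hy)

lemma int_exp_neg (x : ℝ) : (∫ y in (0:ℝ)..x, Real.exp (-y)) = 1 - Real.exp (-x) := by
  have := intervalIntegral.integral_comp_neg (a := 0) (b := x) (fun y => Real.exp y)
  rw [this, integral_exp]
  simp

lemma T_one (x : ℝ) : T (fun _ => 1) x = 2 * (1 - Real.exp (-x)) := by
  rw [T_eq continuous_const x]
  simp only [mul_one]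
  rw [int_exp_neg, integral_exp]
  have : Real.exp (-x) * Real.exp x = 1 := by
    rw [← Real.exp_add]; simp
  rw [Real.exp_zero]
  nlinarith [this]

noncomputable def AA : ℝ → ℝ := fun x => ∫ y in (0:ℝ)..x, Real.exp (-y) * FF y
noncomputable def BB : ℝ → ℝ := fun x => ∫ y in (0:ℝ)..x, Real.exp y * FF y

lemma hasDerivAt_AA (x : ℝ) : HasDerivAt AA (Real.exp (-x) * FF x) x :=
  (((by continuity : Continuous fun y : ℝ => Real.exp (-y)).mul
    contFF).integral_hasStrictDerivAt 0 x).hasDerivAt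

lemma hasDerivAt_BB (x : ℝ) : HasDerivAt BB (Real.exp x * FF x) x :=
  ((Real.continuous_exp.mul contFF).integral_hasStrictDerivAt 0 x).hasDerivAt

lemma hasDerivAt_expneg (x : ℝ) : HasDerivAt (fun x : ℝ => Real.exp (-x)) (-Real.exp (-x)) x := by
  simpa using (hasDerivAt_neg x).exp

lemma hasDerivAt_E (x : ℝ) :
    HasDerivAt (fun x : ℝ => Real.exp (1 - Real.exp (-x)))
      (Real.exp (1 - Real.exp (-x)) * Real.exp (-x)) x := by
  have h1 : HasDerivAt (fun x : ℝ => 1 - Real.exp (-x)) (Real.exp (-x)) x := by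
    simpa using (hasDerivAt_expneg x).const_sub (1:ℝ)
  exact h1.exp

lemma identB (x : ℝ) :
    BB x = 2 + FF x + Real.exp x * FF x - 2 * (Real.exp x * Real.exp (1 - Real.exp (-x))) := by
  set P : ℝ → ℝ := fun x => BB x -
    (2 + FF x + Real.exp x * FF x - 2 * (Real.exp x * Real.exp (1 - Real.exp (-x)))) with hP
  have key : ∀ y : ℝ, HasDerivAt P 0 y := by
    intro y
    have h : HasDerivAt P (Real.exp y * FF y -
        (0 + 2 * Real.exp (1 - Real.exp (-y)) +
          (Real.exp y * FF y + Real.exp y * (2 * Real.exp (1 - Real.exp (-y)))) -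
          2 * (Real.exp y * Real.exp (1 - Real.exp (-y)) +
            Real.exp y * (Real.exp (1 - Real.exp (-y)) * Real.exp (-y))))) y := by
      exact (hasDerivAt_BB y).sub ((((hasDerivAt_const y (2:ℝ)).add (hasDerivAt_FF y)).add
        ((Real.hasDerivAt_exp y).mul (hasDerivAt_FF y))).sub
        (((Real.hasDerivAt_exp y).mul (hasDerivAt_E y)).const_mul 2))
    convert h using 1
    have hc : Real.exp y * (Real.exp (1 - Real.exp (-y)) * Real.exp (-y))
        = Real.exp (1 - Real.exp (-y)) := by
      rw [show Real.exp y * (Real.exp (1 - Real.exp (-y)) * Real.exp (-y))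
          = (Real.exp y * Real.exp (-y)) * Real.exp (1 - Real.exp (-y)) by ring,
        ← Real.exp_add]
      simp
    rw [hc]; ring
  have hconst := is_const_of_deriv_eq_zero
    (fun y => (key y).differentiableAt) (fun y => (key y).deriv) x 0
  have hP0 : P 0 = 0 := by
    have hB0 : BB 0 = 0 := intervalIntegral.integral_same
    have hF0 : FF 0 = 0 := intervalIntegral.integral_same
    simp [hP, hB0, hF0]
  rw [hP0] at hconst
  have : P x = 0 := hconst
  simpa [hP, sub_eq_zero] using this

lemma identQ (x : ℝ) : 2 - 2 * Real.exp (-x) + AA x + Real.exp (-x) * BB x = FF x := by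
  set Q : ℝ → ℝ := fun x => 2 - 2 * Real.exp (-x) + AA x + Real.exp (-x) * BB x - FF x with hQ
  have key : ∀ y : ℝ, HasDerivAt Q 0 y := by
    intro y
    have h : HasDerivAt Q (0 - 2 * (-Real.exp (-y)) + Real.exp (-y) * FF y +
        ((-Real.exp (-y)) * BB y + Real.exp (-y) * (Real.exp y * FF y)) -
        2 * Real.exp (1 - Real.exp (-y))) y := by
      exact ((((hasDerivAt_const y (2:ℝ)).sub ((hasDerivAt_expneg y).const_mul 2)).add
        (hasDerivAt_AA y)).add ((hasDerivAt_expneg y).mul (hasDerivAt_BB y))).sub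
        (hasDerivAt_FF y)
    convert h using 1
    have h1 : Real.exp (-y) * Real.exp y = 1 := by rw [← Real.exp_add]; simp
    rw [identB y]
    have h2 : Real.exp (-y) * (Real.exp y * Real.exp (1 - Real.exp (-y)))
        = Real.exp (1 - Real.exp (-y)) := by
      rw [show Real.exp (-y) * (Real.exp y * Real.exp (1 - Real.exp (-y)))
          = (Real.exp (-y) * Real.exp y) * Real.exp (1 - Real.exp (-y)) by ring, h1, one_mul]
    nlinarith [h1, h2]
  have hconst := is_const_of_deriv_eq_zero
    (fun y => (key y).differentiableAt) (fun y => (key y).deriv) x 0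
  have hQ0 : Q 0 = 0 := by
    have hB0 : BB 0 = 0 := intervalIntegral.integral_same
    have hA0 : AA 0 = 0 := intervalIntegral.integral_same
    have hF0 : FF 0 = 0 := intervalIntegral.integral_same
    simp [hQ, hB0, hA0, hF0]
  rw [hQ0] at hconst
  have : Q x = 0 := hconst
  simp only [hQ] at this
  linarith

lemma T_FF (x : ℝ) : T (fun _ => 1) x + T FF x = FF x := by
  rw [T_one, T_eq contFF x]
  have := identQ x
  show 2 * (1 - Real.exp (-x)) + (AA x + Real.exp (-x) * BB x) = FF x
  linarith

lemma u_succ (k : ℕ) : u (k + 1) = T (u k) := by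
  unfold u
  rw [Function.iterate_succ_apply']

lemma u_zero : u 0 = fun _ => (1:ℝ) := rfl

lemma u_cont (k : ℕ) : Continuous (u k) := by
  induction k with
  | zero => exact continuous_const
  | succ n ih => rw [u_succ]; exact T_cont ih

lemma u_nonneg (k : ℕ) : ∀ x : ℝ, 0 ≤ x → 0 ≤ u k x := by
  induction k with
  | zero => intro x _; norm_num [u_zero]
  | succ n ih =>
    intro x hx
    rw [u_succ]
    exact T_nonneg hx fun y hy => ih y hy.1

noncomputable def S (n : ℕ) : ℝ → ℝ := fun x => ∑ k ∈ Finset.range n, u (k + 1) x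

lemma S_cont (n : ℕ) : Continuous (S n) := by
  unfold S
  exact continuous_finset_sum _ fun k _ => u_cont (k + 1)

lemma S_succ (n : ℕ) (x : ℝ) : S (n + 1) x = T (fun y => 1 + S n y) x := by
  induction n generalizing x with
  | zero =>
    have : (fun y : ℝ => 1 + S 0 y) = u 0 := by
      funext y; simp [S, u_zero]
    rw [this, ← u_succ]
    simp [S]
  | succ n ih =>
    have hsum : (fun y : ℝ => 1 + S (n + 1) y)
        = fun y => (1 + S n y) + u (n + 1) y := by
      funext y
      simp [S, Finset.sum_range_succ]; ring
    rw [hsum, T_add (g := fun y => 1 + S n y) (continuous_const.add (S_cont n)) (u_cont (n + 1)) x, ← ih x, ← u_succ]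
    simp [S, Finset.sum_range_succ]

lemma FF_nonneg {x : ℝ} (hx : 0 ≤ x) : 0 ≤ FF x := by
  apply intervalIntegral.integral_nonneg hx
  intro t _; positivity

lemma S_le_FF (n : ℕ) : ∀ x : ℝ, 0 ≤ x → S n x ≤ FF x := by
  induction n with
  | zero => intro x hx; simpa [S] using FF_nonneg hx
  | succ n ih =>
    intro x hx
    rw [S_succ]
    calc T (fun y => 1 + S n y) x ≤ T (fun y => 1 + FF y) x := by
          apply T_mono (g := fun y => 1 + S n y) (h := fun y => 1 + FF y)
            (continuous_const.add (S_cont n)) (continuous_const.add contFF) hx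
          intro y hy
          exact add_le_add le_rfl (ih y hy.1)
      _ = T (fun _ => 1) x + T FF x := T_add continuous_const contFF x
      _ = FF x := T_FF x

lemma FF_le {x : ℝ} (hx : 0 ≤ x) : FF x ≤ 2 * Real.exp 1 * x := by
  have h : FF x ≤ ∫ _ in (0:ℝ)..x, 2 * Real.exp 1 := by
    apply intervalIntegral.integral_mono_on hx (contFF'.intervalIntegrable 0 x)
      (intervalIntegrable_const)
    intro t _
    have h0 : (1 : ℝ) - Real.exp (-t) ≤ 1 := by
      have := Real.exp_pos (-t); linarith
    have := Real.exp_le_exp.2 h0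
    linarith
  rw [intervalIntegral.integral_const] at h
  simp at h
  linarith

theorem stmt_3 (x : ℝ) (hx : 0 ≤ x) :
    Summable (fun k : ℕ => u (k + 1) x) ∧
    (∑' k : ℕ, u (k + 1) x) ≤ 2 * Real.exp 1 * x := by
  have hnn : ∀ k : ℕ, 0 ≤ u (k + 1) x := fun k => u_nonneg (k + 1) x hx
  have hbd : ∀ n : ℕ, ∑ k ∈ Finset.range n, u (k + 1) x ≤ 2 * Real.exp 1 * x :=
    fun n => (S_le_FF n x hx).trans (FF_le hx)
  exact ⟨summable_of_sum_range_le hnn hbd, Real.tsum_le_of_sum_range_le hnn hbd⟩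
end

section
/- For all real L > 0, ℓ > 0 and 0 < ε ≤ Lℓ one has ∫₀^ℓ e^{−x} (1 − e^{−min(L, ε/x)}) dx ≤ (1 − e^{−L})(1 − e^{−ε/L}) + min(ℓ, ε) + min(ε, 1)·(log(1 + 1/ε) + 1). -/
open MeasureTheory Real

private lemma f_bounds (L ε : ℝ) (hL : 0 < L) (hε : 0 < ε) {x : ℝ} (hx : 0 < x) :
    0 ≤ Real.exp (-x) * (1 - Real.exp (-(min L (ε / x)))) ∧
    Real.exp (-x) * (1 - Real.exp (-(min L (ε / x)))) ≤ 1 := by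
  have hm : 0 ≤ min L (ε / x) := le_min hL.le (div_nonneg hε.le hx.le)
  have h1 : Real.exp (-(min L (ε / x))) ≤ 1 := Real.exp_le_one_iff.2 (by linarith)
  have h2 : 0 < Real.exp (-(min L (ε / x))) := Real.exp_pos _
  have h3 : Real.exp (-x) ≤ 1 := Real.exp_le_one_iff.2 (by linarith)
  constructor
  · exact mul_nonneg (Real.exp_pos _).le (by linarith)
  · nlinarith [Real.exp_pos (-x)]

private lemma f_intble (L ε : ℝ) (hL : 0 < L) (hε : 0 < ε) {a b : ℝ} (ha : 0 ≤ a) (hb : 0 ≤ b) :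
    IntervalIntegrable (fun x => Real.exp (-x) * (1 - Real.exp (-(min L (ε / x))))) volume a b := by
  rw [intervalIntegrable_iff]
  have hmeas : AEStronglyMeasurable (fun x : ℝ => Real.exp (-x) * (1 - Real.exp (-(min L (ε / x)))))
      (volume.restrict (Set.uIoc a b)) := by
    apply Measurable.aestronglyMeasurable
    exact (Real.measurable_exp.comp measurable_neg).mul
      ((measurable_const.sub (Real.measurable_exp.comp
        ((measurable_const.min (measurable_const.div measurable_id)).neg))))
  refine Integrable.mono' (g := fun _ => (1:ℝ)) (MeasureTheory.integrableOn_const measure_Ioc_lt_top.ne) hmeas ?_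
  filter_upwards [ae_restrict_mem measurableSet_uIoc] with x hx
  have hx0 : 0 < x := lt_of_le_of_lt (le_min ha hb) hx.1
  have := f_bounds L ε hL hε hx0
  rw [Real.norm_eq_abs, abs_of_nonneg this.1]
  exact this.2

theorem stmt_7 (L ℓ ε : ℝ) (hL : 0 < L) (hl : 0 < ℓ) (hε : 0 < ε) (hεL : ε ≤ L * ℓ) :
    (∫ x in (0:ℝ)..ℓ, Real.exp (-x) * (1 - Real.exp (-(min L (ε / x))))) ≤
      (1 - Real.exp (-L)) * (1 - Real.exp (-(ε / L))) + min ℓ ε +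
        min ε 1 * (Real.log (1 + 1 / ε) + 1) := by
  have hA : 0 ≤ (1 - Real.exp (-L)) * (1 - Real.exp (-(ε / L))) := by
    apply mul_nonneg
    · have : Real.exp (-L) ≤ 1 := Real.exp_le_one_iff.2 (by linarith)
      linarith
    · have : Real.exp (-(ε / L)) ≤ 1 := Real.exp_le_one_iff.2 (neg_nonpos.2 (by positivity))
      linarith
  have hlog : 0 ≤ Real.log (1 + 1 / ε) := Real.log_nonneg (by have := one_div_pos.2 hε; linarith)
  -- bound on a prefix interval
  have prefix_bd : ∀ a b : ℝ, 0 ≤ a → a ≤ b →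
      (∫ x in a..b, Real.exp (-x) * (1 - Real.exp (-(min L (ε / x))))) ≤ b - a := by
    intro a b ha hab
    have := intervalIntegral.norm_integral_le_of_norm_le_const (C := 1)
      (f := fun x => Real.exp (-x) * (1 - Real.exp (-(min L (ε / x))))) (a := a) (b := b) ?_
    · calc (∫ x in a..b, Real.exp (-x) * (1 - Real.exp (-(min L (ε / x)))))
          ≤ ‖∫ x in a..b, Real.exp (-x) * (1 - Real.exp (-(min L (ε / x))))‖ := le_abs_self _
        _ ≤ 1 * |b - a| := this
        _ = b - a := by rw [one_mul, abs_of_nonneg (by linarith)]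
    · intro x hx
      have hx0 : 0 < x := lt_of_le_of_lt (by simp [min_eq_left hab, ha] : (0:ℝ) ≤ min a b) hx.1
      have := f_bounds L ε hL hε hx0
      rw [Real.norm_eq_abs, abs_of_nonneg this.1]
      exact this.2
  rcases le_or_gt ℓ ε with hle | hlt
  · -- easy case
    have h1 := prefix_bd 0 ℓ le_rfl hl.le
    have hmin : min ℓ ε = ℓ := min_eq_left hle
    have : 0 ≤ min ε 1 * (Real.log (1 + 1 / ε) + 1) := by positivity
    linarith
  · -- ε < ℓ : split at ε
    have hsplit : (∫ x in (0:ℝ)..ℓ, Real.exp (-x) * (1 - Real.exp (-(min L (ε / x))))) =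
        (∫ x in (0:ℝ)..ε, Real.exp (-x) * (1 - Real.exp (-(min L (ε / x))))) +
        (∫ x in ε..ℓ, Real.exp (-x) * (1 - Real.exp (-(min L (ε / x))))) :=
      (intervalIntegral.integral_add_adjacent_intervals
        (f_intble L ε hL hε le_rfl hε.le) (f_intble L ε hL hε hε.le hl.le)).symm
    have h1 : (∫ x in (0:ℝ)..ε, Real.exp (-x) * (1 - Real.exp (-(min L (ε / x))))) ≤ ε := by
      have := prefix_bd 0 ε le_rfl hε.le; linarith
    have hmin : min ℓ ε = ε := min_eq_right hlt.le
    -- now bound tail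
    have htail : (∫ x in ε..ℓ, Real.exp (-x) * (1 - Real.exp (-(min L (ε / x))))) ≤
        min ε 1 * (Real.log (1 + 1 / ε) + 1) := by
      have fle_exp : ∀ x : ℝ, Real.exp (-x) * (1 - Real.exp (-(min L (ε / x)))) ≤ Real.exp (-x) := by
        intro x
        nlinarith [Real.exp_pos (-x), Real.exp_pos (-(min L (ε / x)))]
      have fle_div : ∀ x : ℝ, 0 < x → Real.exp (-x) * (1 - Real.exp (-(min L (ε / x)))) ≤ ε / x := by
        intro x hx
        have h1 : 1 - Real.exp (-(min L (ε / x))) ≤ min L (ε / x) := by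
          have := Real.add_one_le_exp (-(min L (ε / x))); linarith
        have h2 : min L (ε / x) ≤ ε / x := min_le_right _ _
        have h3 : Real.exp (-x) ≤ 1 := Real.exp_le_one_iff.2 (by linarith)
        have h4 : 0 ≤ 1 - Real.exp (-(min L (ε / x))) := by
          have hm : 0 ≤ min L (ε / x) := le_min hL.le (div_nonneg hε.le hx.le)
          have := Real.exp_le_one_iff.2 (neg_nonpos.2 hm); linarith
        calc Real.exp (-x) * (1 - Real.exp (-(min L (ε / x))))
            ≤ 1 * (1 - Real.exp (-(min L (ε / x)))) := by nlinarith
          _ ≤ ε / x := by rw [one_mul]; linarith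
      have fle_eps_exp : ∀ x : ℝ, 1 ≤ x → Real.exp (-x) * (1 - Real.exp (-(min L (ε / x)))) ≤ ε * Real.exp (-x) := by
        intro x hx
        have hx0 : 0 < x := lt_of_lt_of_le one_pos hx
        have h1 : 1 - Real.exp (-(min L (ε / x))) ≤ ε / x := by
          have := Real.add_one_le_exp (-(min L (ε / x)))
          have h2 : min L (ε / x) ≤ ε / x := min_le_right _ _
          linarith
        have h2 : ε / x ≤ ε := by
          rw [div_le_iff₀ hx0]; nlinarith
        calc Real.exp (-x) * (1 - Real.exp (-(min L (ε / x))))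
            ≤ Real.exp (-x) * ε := by
              apply mul_le_mul_of_nonneg_left (by linarith) (Real.exp_pos _).le
          _ = ε * Real.exp (-x) := mul_comm _ _
      have exp_int : ∀ a b : ℝ, (∫ x in a..b, Real.exp (-x)) = Real.exp (-a) - Real.exp (-b) := by
        intro a b
        rw [intervalIntegral.integral_comp_neg (fun x => Real.exp x), integral_exp]
      rcases le_or_gt 1 ε with h1ε | h1ε
      · -- ε ≥ 1 : tail ≤ exp(-ε) ≤ 1
        have hmono := intervalIntegral.integral_mono_on hlt.le (f_intble L ε hL hε hε.le hl.le)
          (by exact (Real.continuous_exp.comp continuous_neg).intervalIntegrable _ _)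
          (fun x _ => fle_exp x)
        rw [exp_int] at hmono
        have hee : Real.exp (-ε) ≤ 1 := Real.exp_le_one_iff.2 (by linarith)
        have hel : 0 < Real.exp (-ℓ) := Real.exp_pos _
        have : min ε 1 = 1 := min_eq_right h1ε
        rw [this, one_mul]
        linarith
      · -- ε < 1
        have hminε : min ε 1 = ε := min_eq_left h1ε.le
        rw [hminε]
        have hlog1 : Real.log (1 / ε) ≤ Real.log (1 + 1 / ε) :=
          Real.log_le_log (by positivity) (by linarith)
        have div_int : ∀ b : ℝ, ε ≤ b → b ≤ 1 → (∫ x in ε..b, ε / x) = ε * Real.log (b / ε) := by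
          intro b hb hb1
          have : (fun x : ℝ => ε / x) = fun x : ℝ => ε * (1 / x) := by
            funext x; ring
          rw [this, intervalIntegral.integral_const_mul, integral_one_div]
          intro h
          rcases Set.mem_uIcc.1 h with ⟨h1, _⟩ | ⟨_, h2⟩
          · linarith
          · linarith
        rcases le_or_gt ℓ 1 with hℓ1 | hℓ1
        · -- ℓ ≤ 1: bound by ∫ ε/x
          have hmono := intervalIntegral.integral_mono_on hlt.le (f_intble L ε hL hε hε.le hl.le)
            ?_ (fun x hx => fle_div x (lt_of_lt_of_le hε hx.1))
          · rw [div_int ℓ hlt.le hℓ1] at hmono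
            have : Real.log (ℓ / ε) ≤ Real.log (1 / ε) :=
              Real.log_le_log (by positivity) (by rw [div_le_div_iff₀ hε hε]; nlinarith)
            nlinarith
          · -- integrability of ε / x on [ε, ℓ]
            apply ContinuousOn.intervalIntegrable
            apply ContinuousOn.div continuousOn_const continuousOn_id
            intro x hx
            rw [Set.uIcc_of_le hlt.le] at hx
            exact ne_of_gt (lt_of_lt_of_le hε hx.1)
        · -- ℓ > 1 : split at 1
          have hsplit2 : (∫ x in ε..ℓ, Real.exp (-x) * (1 - Real.exp (-(min L (ε / x))))) =
              (∫ x in ε..(1:ℝ), Real.exp (-x) * (1 - Real.exp (-(min L (ε / x))))) +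
              (∫ x in (1:ℝ)..ℓ, Real.exp (-x) * (1 - Real.exp (-(min L (ε / x))))) :=
            (intervalIntegral.integral_add_adjacent_intervals
              (f_intble L ε hL hε hε.le zero_le_one) (f_intble L ε hL hε zero_le_one hl.le)).symm
          have hpart1 : (∫ x in ε..(1:ℝ), Real.exp (-x) * (1 - Real.exp (-(min L (ε / x))))) ≤
              ε * Real.log (1 / ε) := by
            have hmono := intervalIntegral.integral_mono_on h1ε.le (f_intble L ε hL hε hε.le zero_le_one)
              ?_ (fun x hx => fle_div x (lt_of_lt_of_le hε hx.1))
            · rwa [div_int 1 h1ε.le le_rfl] at hmono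
            · apply ContinuousOn.intervalIntegrable
              apply ContinuousOn.div continuousOn_const continuousOn_id
              intro x hx
              rw [Set.uIcc_of_le h1ε.le] at hx
              exact ne_of_gt (lt_of_lt_of_le hε hx.1)
          have hpart2 : (∫ x in (1:ℝ)..ℓ, Real.exp (-x) * (1 - Real.exp (-(min L (ε / x))))) ≤ ε := by
            have hmono := intervalIntegral.integral_mono_on hℓ1.le (f_intble L ε hL hε zero_le_one hl.le)
              ?_ (fun x hx => fle_eps_exp x hx.1)
            · have heq : (∫ x in (1:ℝ)..ℓ, ε * Real.exp (-x)) = ε * (Real.exp (-1) - Real.exp (-ℓ)) := by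
                rw [intervalIntegral.integral_const_mul, exp_int]
              rw [heq] at hmono
              have h1 : Real.exp (-1 : ℝ) ≤ 1 := Real.exp_le_one_iff.2 (by norm_num)
              have h2 : 0 < Real.exp (-ℓ) := Real.exp_pos _
              nlinarith
            · exact (continuous_const.mul (Real.continuous_exp.comp continuous_neg)).intervalIntegrable _ _
          rw [hsplit2]
          nlinarith
    linarith [hsplit, h1, htail, hA, hmin]
end

section
/- For every t ≥ 0 let p_t = e^{−t} δ_t + μ_t, where μ_t has density a ↦ e^{−a} 1_{[0,t)}(a) with respect to Lebesgue measure on ℝ. Then for every continuously differentiable φ : ℝ² → ℝ with compact support, − ∫₀^∞ ∫_ℝ ∂_t φ(t,a) p_t(da) dt = φ(0,0) + ∫₀^∞ ∫_ℝ ∂_a φ(s,a) p_s(da) ds + ∫₀^∞ ( φ(s,0) − ∫_ℝ φ(s,a) p_s(da) ) ds; that is, p_t is a weak solution of the continuity equation ∂_t p_t + ∂_a p_t = −p_t + (∫_ℝ p_t(da)) δ_0 with initial condition p_0 = δ_0. -/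
open MeasureTheory Real Set Filter
open scoped NNReal ENNReal

/-- The measure `p_t = e^{−t} δ_t + e^{−a} 1_{[0,t)}(a) da` on `ℝ`. -/
noncomputable def p (t : ℝ) : Measure ℝ :=
  (ENNReal.ofReal (Real.exp (-t))) • Measure.dirac t +
    volume.withDensity
      (Set.indicator (Set.Ico (0 : ℝ) t) (fun a => ENNReal.ofReal (Real.exp (-a))))

lemma integral_p (t : ℝ) (f : ℝ → ℝ) (hf : Continuous f) :
    ∫ a, f a ∂(p t) = Real.exp (-t) * f t + ∫ a in Set.Ico (0:ℝ) t, Real.exp (-a) * f a := by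
  have hmeas : Measurable fun a : ℝ => (Real.exp (-a)).toNNReal :=
    (Real.continuous_exp.comp continuous_neg).measurable.real_toNNReal
  have hν : volume.withDensity
      (Set.indicator (Set.Ico (0 : ℝ) t) (fun a => ENNReal.ofReal (Real.exp (-a))))
      = (volume.restrict (Set.Ico (0:ℝ) t)).withDensity
          fun a => (((Real.exp (-a)).toNNReal : ℝ≥0) : ℝ≥0∞) := by
    rw [withDensity_indicator measurableSet_Ico]
    congr 1
  have hcont : Continuous fun x : ℝ => (Real.exp (-x)).toNNReal • f x :=
    (continuous_real_toNNReal.comp (Real.continuous_exp.comp continuous_neg)).smul hf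
  have hint2 : Integrable f ((volume.restrict (Set.Ico (0:ℝ) t)).withDensity
      fun a => (((Real.exp (-a)).toNNReal : ℝ≥0) : ℝ≥0∞)) := by
    rw [integrable_withDensity_iff_integrable_smul hmeas]
    exact ((hcont.continuousOn).integrableOn_compact isCompact_Icc).mono_set Set.Ico_subset_Icc_self
  have hd : Integrable f (Measure.dirac t) :=
    ⟨hf.aestronglyMeasurable, by simp [HasFiniteIntegral, lintegral_dirac]⟩
  rw [show p t = (ENNReal.ofReal (Real.exp (-t))) • Measure.dirac t +
      (volume.restrict (Set.Ico (0:ℝ) t)).withDensity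
          (fun a => (((Real.exp (-a)).toNNReal : ℝ≥0) : ℝ≥0∞)) from by rw [p, hν]]
  rw [integral_add_measure (hd.smul_measure ENNReal.ofReal_ne_top) hint2,
    integral_smul_measure, integral_dirac, integral_withDensity_eq_integral_smul hmeas]
  congr 1
  · rw [ENNReal.toReal_ofReal (Real.exp_pos _).le, smul_eq_mul]
  · refine setIntegral_congr_fun measurableSet_Ico fun a _ => ?_
    simp [NNReal.smul_def, Real.coe_toNNReal _ (Real.exp_pos _).le]

lemma exists_bound (F : ℝ × ℝ → ℝ) (hF : HasCompactSupport F) :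
    ∃ R : ℝ, 0 ≤ R ∧ ∀ t a : ℝ, R < |t| → F (t, a) = 0 := by
  obtain ⟨r, hr⟩ := hF.isBounded.subset_closedBall 0
  refine ⟨max r 0, le_max_right _ _, fun t a ht => ?_⟩
  by_contra h
  have hx := hr (subset_tsupport F (Function.mem_support.2 h))
  rw [Metric.mem_closedBall, dist_zero_right] at hx
  have h1 : |t| ≤ ‖((t, a) : ℝ × ℝ)‖ := by
    rw [Prod.norm_def]
    simp [Real.norm_eq_abs]
  have : |t| ≤ max r 0 := le_trans h1 (hx.trans (le_max_left _ _))
  exact absurd this (not_le.2 ht)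

lemma cs_of_bound {f : ℝ → ℝ} {R : ℝ} (h : ∀ t, R < |t| → f t = 0) :
    HasCompactSupport f :=
  HasCompactSupport.intro isCompact_Icc fun t ht =>
    h t (by rwa [Set.mem_Icc, ← abs_le, not_le] at ht)

lemma fubini_step (g : ℝ × ℝ → ℝ) (hg : Continuous g) (hgs : HasCompactSupport g) :
    Integrable (fun t => ∫ a in Set.Ico (0:ℝ) t, Real.exp (-a) * g (t, a)) volume ∧
    (∫ t in Set.Ioi (0:ℝ), ∫ a in Set.Ico (0:ℝ) t, Real.exp (-a) * g (t, a))
      = ∫ a in Set.Ici (0:ℝ), Real.exp (-a) * ∫ t in Set.Ioi a, g (t, a) := by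
  set S : Set (ℝ × ℝ) := {x | 0 ≤ x.2 ∧ x.2 < x.1} with hSdef
  have hS : MeasurableSet S :=
    (measurableSet_le measurable_const measurable_snd).inter
      (measurableSet_lt measurable_snd measurable_fst)
  set F : ℝ × ℝ → ℝ := fun x => Real.exp (-x.2) * g x with hFdef
  have hFc : Continuous F := (Real.continuous_exp.comp continuous_snd.neg).mul hg
  have hFs : HasCompactSupport F := hgs.mul_left
  set Ψ : ℝ × ℝ → ℝ := fun x => S.indicator F x with hΨdef
  have hΨ : Integrable Ψ volume := (hFc.integrable_of_hasCompactSupport hFs).indicator hS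
  have inner_eq : ∀ t, (∫ a in Set.Ico (0:ℝ) t, Real.exp (-a) * g (t, a)) = ∫ a, Ψ (t, a) := by
    intro t
    rw [← integral_indicator measurableSet_Ico]
    congr 1
  have hΨprod : Integrable Ψ (volume.prod volume) := by
    rwa [← MeasureTheory.Measure.volume_eq_prod]
  have hfun : (fun t => ∫ a in Set.Ico (0:ℝ) t, Real.exp (-a) * g (t, a))
      = fun t => ∫ a, Ψ (t, a) := funext inner_eq
  constructor
  · rw [hfun]; exact hΨprod.integral_prod_left
  rw [hfun]
  have houter : (∫ t in Set.Ioi (0:ℝ), ∫ a, Ψ (t, a)) = ∫ t, ∫ a, Ψ (t, a) := by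
    refine setIntegral_eq_integral_of_forall_compl_eq_zero fun t ht => ?_
    have : ∀ a, Ψ (t, a) = 0 := fun a =>
      Set.indicator_of_notMem (fun hc => ht (lt_of_le_of_lt hc.1 hc.2)) _
    simp [this]
  have hswap : (∫ t, ∫ a, Ψ (t, a)) = ∫ a, ∫ t, Ψ (t, a) :=
    integral_integral_swap hΨprod
  have hinner2 : ∀ a : ℝ, (∫ t, Ψ (t, a))
      = Set.indicator (Set.Ici (0:ℝ)) (fun a => Real.exp (-a) * ∫ t in Set.Ioi a, g (t, a)) a := by
    intro a
    by_cases ha : (0:ℝ) ≤ a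
    · rw [Set.indicator_of_mem (Set.mem_Ici.2 ha)]
      have hpt : ∀ t, Ψ (t, a) = (Set.Ioi a).indicator (fun t => Real.exp (-a) * g (t, a)) t := by
        intro t
        simp only [hΨdef, hSdef, hFdef, Set.indicator_apply, Set.mem_setOf_eq, Set.mem_Ioi]
        by_cases hta : a < t
        · simp [hta, ha]
        · simp [hta]
      simp only [hpt]
      rw [integral_indicator measurableSet_Ioi, integral_const_mul]
    · rw [Set.indicator_of_notMem (fun hc => ha (Set.mem_Ici.1 hc))]
      have : ∀ t, Ψ (t, a) = 0 := fun t =>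
        Set.indicator_of_notMem (fun hc => ha hc.1) _
      simp [this]
  rw [houter, hswap]
  simp only [hinner2]
  rw [integral_indicator measurableSet_Ici]

theorem stmt_17 (φ : ℝ × ℝ → ℝ) (hφ : ContDiff ℝ 1 φ) (hsupp : HasCompactSupport φ) :
    -(∫ t in Set.Ioi (0 : ℝ), ∫ a, deriv (fun s => φ (s, a)) t ∂(p t)) =
      φ (0, 0) + (∫ s in Set.Ioi (0 : ℝ), ∫ a, deriv (fun b => φ (s, b)) a ∂(p s)) +
        ∫ s in Set.Ioi (0 : ℝ), (φ (s, 0) - ∫ a, φ (s, a) ∂(p s)) := by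
  have hdφ : Differentiable ℝ φ := hφ.differentiable one_ne_zero
  set f1 : ℝ × ℝ → ℝ := fun x => fderiv ℝ φ x (1, 0) with hf1def
  set f2 : ℝ × ℝ → ℝ := fun x => fderiv ℝ φ x (0, 1) with hf2def
  have hc1 : Continuous f1 := (hφ.continuous_fderiv one_ne_zero).clm_apply continuous_const
  have hc2 : Continuous f2 := (hφ.continuous_fderiv one_ne_zero).clm_apply continuous_const
  have hs1 : HasCompactSupport f1 := hsupp.fderiv_apply ℝ (1, 0)
  have hs2 : HasCompactSupport f2 := hsupp.fderiv_apply ℝ (0, 1)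
  have hd1 : ∀ t a : ℝ, HasDerivAt (fun s => φ (s, a)) (f1 (t, a)) t := fun t a =>
    (hdφ (t, a)).hasFDerivAt.comp_hasDerivAt t ((hasDerivAt_id t).prodMk (hasDerivAt_const t a))
  have hd2 : ∀ t a : ℝ, HasDerivAt (fun b => φ (t, b)) (f2 (t, a)) a := fun t a =>
    (hdφ (t, a)).hasFDerivAt.comp_hasDerivAt a ((hasDerivAt_const a t).prodMk (hasDerivAt_id a))
  have hdd : ∀ t : ℝ, HasDerivAt (fun s => φ (s, s)) (f1 (t, t) + f2 (t, t)) t := by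
    intro t
    have hprod : HasDerivAt (fun s : ℝ => (s, s)) ((1:ℝ), (1:ℝ)) t :=
      (hasDerivAt_id t).prodMk (hasDerivAt_id t)
    have h := HasFDerivAt.comp_hasDerivAt (f := fun s : ℝ => (s, s)) t (hdφ (t, t)).hasFDerivAt hprod
    have he : fderiv ℝ φ (t, t) ((1:ℝ), (1:ℝ)) = f1 (t, t) + f2 (t, t) := by
      rw [show ((1:ℝ), (1:ℝ)) = ((1:ℝ), (0:ℝ)) + ((0:ℝ), (1:ℝ)) by rw [Prod.mk_add_mk]; norm_num,
        map_add]
    rwa [he] at h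
  have hexp : ∀ a : ℝ, HasDerivAt (fun a => Real.exp (-a)) (-Real.exp (-a)) a := by
    intro a
    simpa using (hasDerivAt_neg a).exp
  obtain ⟨R, hR0, hRφ⟩ := exists_bound φ hsupp
  have sect : ∀ (G : ℝ × ℝ → ℝ), HasCompactSupport G → ∀ a : ℝ,
      HasCompactSupport fun t => G (t, a) := by
    intro G hG a
    obtain ⟨R', _, hR'⟩ := exists_bound G hG
    exact cs_of_bound fun t ht => hR' t a ht
  have diagcs : ∀ (G : ℝ × ℝ → ℝ), HasCompactSupport G →
      HasCompactSupport fun t => G (t, t) := by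
    intro G hG
    obtain ⟨R', _, hR'⟩ := exists_bound G hG
    exact cs_of_bound fun t ht => hR' t t ht
  have hdiagint : ∀ (G : ℝ × ℝ → ℝ), Continuous G → HasCompactSupport G →
      Integrable (fun t => Real.exp (-t) * G (t, t)) volume := by
    intro G hGc hGs
    exact Continuous.integrable_of_hasCompactSupport
      ((Real.continuous_exp.comp continuous_neg).mul
        (hGc.comp (continuous_id.prodMk continuous_id)))
      (HasCompactSupport.mul_left (diagcs G hGs))
  have hA : Integrable (fun t => Real.exp (-t) * f1 (t, t)) volume := hdiagint f1 hc1 hs1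
  have hB : Integrable (fun t => Real.exp (-t) * f2 (t, t)) volume := hdiagint f2 hc2 hs2
  have hC : Integrable (fun t => Real.exp (-t) * φ (t, t)) volume := hdiagint φ hφ.continuous hsupp
  have hE : Integrable (fun s => φ (s, 0)) volume :=
    Continuous.integrable_of_hasCompactSupport
      (hφ.continuous.comp (continuous_id.prodMk continuous_const)) (sect φ hsupp 0)
  have hfub1 := fubini_step f1 hc1 hs1
  have hfub2 := fubini_step f2 hc2 hs2
  have hfub0 := fubini_step φ hφ.continuous hsupp
  -- FTC on `Ioi a` in the first variable
  have hIoi : ∀ a : ℝ, (∫ t in Set.Ioi a, f1 (t, a)) = -φ (a, a) := by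
    intro a
    have hcont : ContinuousWithinAt (fun t => φ (t, a)) (Set.Ici a) a :=
      (hφ.continuous.comp (continuous_id.prodMk continuous_const)).continuousWithinAt
    have hint : IntegrableOn (fun t => f1 (t, a)) (Set.Ioi a) :=
      ((hc1.comp (continuous_id.prodMk continuous_const)).integrable_of_hasCompactSupport
        (sect f1 hs1 a)).integrableOn
    have htend : Filter.Tendsto (fun t => φ (t, a)) Filter.atTop (nhds 0) := by
      refine Filter.Tendsto.congr' ?_ tendsto_const_nhds
      filter_upwards [Filter.eventually_gt_atTop R] with t ht
      exact (hRφ t a (lt_of_lt_of_le ht (le_abs_self t))).symm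
    have h := integral_Ioi_of_hasDerivAt_of_tendsto (f := fun t => φ (t, a))
      (f' := fun t => f1 (t, a)) hcont (fun x _ => hd1 x a) hint htend
    rw [h]; ring
  -- FTC on the diagonal
  have hdiagFTC : (∫ t in Set.Ioi (0:ℝ), (Real.exp (-t) * f1 (t, t) + Real.exp (-t) * f2 (t, t)
      - Real.exp (-t) * φ (t, t))) = -φ (0, 0) := by
    have hder : ∀ x ∈ Set.Ioi (0:ℝ), HasDerivAt (fun t => Real.exp (-t) * φ (t, t))
        (Real.exp (-x) * f1 (x, x) + Real.exp (-x) * f2 (x, x) - Real.exp (-x) * φ (x, x)) x := by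
      intro x _
      have h := (hexp x).mul (hdd x)
      exact h.congr_deriv (by ring)
    have hcont : ContinuousWithinAt (fun t => Real.exp (-t) * φ (t, t)) (Set.Ici 0) 0 :=
      ((Real.continuous_exp.comp continuous_neg).mul
        (hφ.continuous.comp (continuous_id.prodMk continuous_id))).continuousWithinAt
    have hintd : IntegrableOn (fun x => Real.exp (-x) * f1 (x, x) + Real.exp (-x) * f2 (x, x)
        - Real.exp (-x) * φ (x, x)) (Set.Ioi (0:ℝ)) := ((hA.add hB).sub hC).integrableOn
    have htend : Filter.Tendsto (fun t => Real.exp (-t) * φ (t, t)) Filter.atTop (nhds 0) := by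
      refine Filter.Tendsto.congr' ?_ tendsto_const_nhds
      filter_upwards [Filter.eventually_gt_atTop R] with t ht
      rw [hRφ t t (lt_of_lt_of_le ht (le_abs_self t)), mul_zero]
    have h := integral_Ioi_of_hasDerivAt_of_tendsto hcont hder hintd htend
    rw [h]
    norm_num
  -- integration by parts in the second variable
  have hIBP : ∀ s ∈ Set.Ioi (0:ℝ),
      (∫ a in Set.Ico (0:ℝ) s, Real.exp (-a) * f2 (s, a))
        - (∫ a in Set.Ico (0:ℝ) s, Real.exp (-a) * φ (s, a))
      = Real.exp (-s) * φ (s, s) - φ (s, 0) := by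
    intro s hs
    have hs' : (0:ℝ) ≤ s := le_of_lt hs
    have hi2 : IntervalIntegrable (fun a => Real.exp (-a) * f2 (s, a)) volume 0 s :=
      ((Real.continuous_exp.comp continuous_neg).mul
        (hc2.comp (continuous_const.prodMk continuous_id))).intervalIntegrable 0 s
    have hi0 : IntervalIntegrable (fun a => Real.exp (-a) * φ (s, a)) volume 0 s :=
      ((Real.continuous_exp.comp continuous_neg).mul
        (hφ.continuous.comp (continuous_const.prodMk continuous_id))).intervalIntegrable 0 s
    rw [integral_Ico_eq_integral_Ioo, integral_Ico_eq_integral_Ioo,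
      ← integral_Ioc_eq_integral_Ioo, ← integral_Ioc_eq_integral_Ioo,
      ← intervalIntegral.integral_of_le hs', ← intervalIntegral.integral_of_le hs',
      ← intervalIntegral.integral_sub hi2 hi0]
    have hder : ∀ a ∈ Set.uIcc (0:ℝ) s, HasDerivAt (fun a => Real.exp (-a) * φ (s, a))
        (Real.exp (-a) * f2 (s, a) - Real.exp (-a) * φ (s, a)) a := by
      intro a _
      have h := (hexp a).mul (hd2 s a)
      exact h.congr_deriv (by ring)
    rw [intervalIntegral.integral_eq_sub_of_hasDerivAt hder (hi2.sub hi0)]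
    norm_num
  -- rewrite the three inner integrals
  have hrw1 : ∀ t : ℝ, (∫ a, deriv (fun s => φ (s, a)) t ∂(p t)) =
      Real.exp (-t) * f1 (t, t) + ∫ a in Set.Ico (0:ℝ) t, Real.exp (-a) * f1 (t, a) := by
    intro t
    have h0 : (∫ a, deriv (fun s => φ (s, a)) t ∂(p t)) = ∫ a, f1 (t, a) ∂(p t) :=
      integral_congr_ae (Filter.Eventually.of_forall fun a => (hd1 t a).deriv)
    rw [h0, integral_p t (fun a => f1 (t, a)) (hc1.comp (continuous_const.prodMk continuous_id))]
  have hrw2 : ∀ s : ℝ, (∫ a, deriv (fun b => φ (s, b)) a ∂(p s)) =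
      Real.exp (-s) * f2 (s, s) + ∫ a in Set.Ico (0:ℝ) s, Real.exp (-a) * f2 (s, a) := by
    intro s
    have h0 : (∫ a, deriv (fun b => φ (s, b)) a ∂(p s)) = ∫ a, f2 (s, a) ∂(p s) :=
      integral_congr_ae (Filter.Eventually.of_forall fun a => (hd2 s a).deriv)
    rw [h0, integral_p s (fun a => f2 (s, a)) (hc2.comp (continuous_const.prodMk continuous_id))]
  have hrw0 : ∀ s : ℝ, (∫ a, φ (s, a) ∂(p s)) =
      Real.exp (-s) * φ (s, s) + ∫ a in Set.Ico (0:ℝ) s, Real.exp (-a) * φ (s, a) := by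
    intro s
    rw [integral_p s (fun a => φ (s, a))
      (hφ.continuous.comp (continuous_const.prodMk continuous_id))]
  simp only [hrw1, hrw2, hrw0]
  rw [MeasureTheory.integral_add hA.integrableOn hfub1.1.integrableOn,
    MeasureTheory.integral_add hB.integrableOn hfub2.1.integrableOn,
    MeasureTheory.integral_sub hE.integrableOn
      (show Integrable (fun s => Real.exp (-s) * φ (s, s)
        + ∫ a in Set.Ico (0:ℝ) s, Real.exp (-a) * φ (s, a)) (volume.restrict (Set.Ioi 0))
        from (hC.add hfub0.1).integrableOn),
    MeasureTheory.integral_add hC.integrableOn hfub0.1.integrableOn]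
  have hY1val : (∫ t in Set.Ioi (0:ℝ), ∫ a in Set.Ico (0:ℝ) t, Real.exp (-a) * f1 (t, a))
      = -(∫ t in Set.Ioi (0:ℝ), Real.exp (-t) * φ (t, t)) := by
    rw [hfub1.2]
    have h : ∀ a ∈ Set.Ici (0:ℝ), Real.exp (-a) * (∫ t in Set.Ioi a, f1 (t, a))
        = -(Real.exp (-a) * φ (a, a)) := fun a _ => by rw [hIoi a]; ring
    rw [setIntegral_congr_fun measurableSet_Ici h, integral_neg,
      MeasureTheory.integral_Ici_eq_integral_Ioi]
  have hpieces : (∫ s in Set.Ioi (0:ℝ), ∫ a in Set.Ico (0:ℝ) s, Real.exp (-a) * f2 (s, a))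
      - (∫ s in Set.Ioi (0:ℝ), ∫ a in Set.Ico (0:ℝ) s, Real.exp (-a) * φ (s, a))
      = (∫ s in Set.Ioi (0:ℝ), Real.exp (-s) * φ (s, s)) - ∫ s in Set.Ioi (0:ℝ), φ (s, 0) := by
    rw [← MeasureTheory.integral_sub hfub2.1.integrableOn hfub0.1.integrableOn,
      ← MeasureTheory.integral_sub hC.integrableOn hE.integrableOn]
    exact setIntegral_congr_fun measurableSet_Ioi fun s hs => hIBP s hs
  have hsplit : (∫ t in Set.Ioi (0:ℝ), Real.exp (-t) * f1 (t, t))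
      + (∫ t in Set.Ioi (0:ℝ), Real.exp (-t) * f2 (t, t))
      - (∫ t in Set.Ioi (0:ℝ), Real.exp (-t) * φ (t, t)) = -φ (0, 0) := by
    rw [← MeasureTheory.integral_add hA.integrableOn hB.integrableOn,
      ← MeasureTheory.integral_sub
        (show Integrable (fun t => Real.exp (-t) * f1 (t, t) + Real.exp (-t) * f2 (t, t))
          (volume.restrict (Set.Ioi 0)) from (hA.add hB).integrableOn) hC.integrableOn]
    exact hdiagFTC
  linarith [hY1val, hpieces, hsplit]
end
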